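/- arXiv:2211.04430 — 4 statements merged into one kernel-verified Lean document; each statement's English description precedes it below -/
import Mathlib

section
/- Let N ≥ 2 and K ≥ 1, and let (w, P) be a configuration with confidence e. If f : ℝ → ℝ is concave on the interval [0,1], then the f-impurity satisfies I ≤ f(e) + (N−1)·f((1−e)/(N−1)). (Paper's Theorem 1, the upper bound u(e) on the impurity.) -/
open Finset

/-- The maximum of a real-valued vector over the finite index set `Fin N` (`N > 0`). -/
noncomputable def colMax {N : ℕ} (hN : 0 < N) (v : Fin N → ℝ) : ℝ :=
  Finset.univ.sup' (Finset.univ_nonempty_iff.mpr ⟨⟨0, hN⟩⟩) v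

/-- Paper's Theorem 1 (upper bound): for a configuration `(w, P)` with confidence `e`,
if `f` is concave on `[0,1]` then the `f`-impurity is at most
`f(e) + (N-1) * f((1-e)/(N-1))`. -/
theorem impurity_upper_bound (N K : ℕ) (hN : 2 ≤ N) (hK : 1 ≤ K)
    (w : Fin K → ℝ) (hw : ∀ k, 0 ≤ w k) (hws : ∑ k, w k = 1)
    (P : Fin K → Fin N → ℝ) (hP : ∀ k i, 0 ≤ P k i) (hPs : ∀ k, ∑ i, P k i = 1)
    (f : ℝ → ℝ) (hf : ConcaveOn ℝ (Set.Icc (0 : ℝ) 1) f)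
    (e : ℝ) (he : e = ∑ k, w k * colMax (by omega) (P k)) :
    ∑ k, ∑ i, w k * f (P k i) ≤ f e + ((N : ℝ) - 1) * f ((1 - e) / ((N : ℝ) - 1)) := by
  have hN0 : (0 : ℕ) < N := by omega
  have hN1 : (0 : ℝ) < (N : ℝ) - 1 := by
    have : (2 : ℝ) ≤ (N : ℝ) := by exact_mod_cast hN
    linarith
  set m : Fin K → ℝ := fun k => colMax hN0 (P k) with hm
  -- basic bounds on m
  have hPle : ∀ k i, P k i ≤ 1 := by
    intro k i
    have := Finset.single_le_sum (f := P k) (fun j _ => hP k j) (Finset.mem_univ i)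
    rw [hPs k] at this; exact this
  have hmle : ∀ k i, P k i ≤ m k := fun k i =>
    Finset.le_sup' (P k) (Finset.mem_univ i)
  have hm0 : ∀ k, 0 ≤ m k := fun k => le_trans (hP k ⟨0, hN0⟩) (hmle k ⟨0, hN0⟩)
  have hm1 : ∀ k, m k ≤ 1 := by
    intro k
    obtain ⟨i0, _, hi0⟩ := Finset.exists_mem_eq_sup' (Finset.univ_nonempty_iff.mpr ⟨⟨0, hN0⟩⟩) (P k)
    exact le_trans (le_of_eq hi0) (hPle k i0)
  have h2N : (2:ℝ) ≤ (N:ℝ) := by exact_mod_cast hN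
  have hrmem : ∀ k, (1 - m k) / ((N:ℝ) - 1) ∈ Set.Icc (0:ℝ) 1 := by
    intro k
    constructor
    · exact div_nonneg (by linarith [hm1 k]) hN1.le
    · rw [div_le_one hN1]; linarith [hm0 k]
  -- inner bound per k
  have hinner : ∀ k, ∑ i, f (P k i) ≤ f (m k) + ((N:ℝ) - 1) * f ((1 - m k) / ((N:ℝ) - 1)) := by
    intro k
    obtain ⟨i0, _, hi0⟩ := Finset.exists_mem_eq_sup' (Finset.univ_nonempty_iff.mpr ⟨⟨0, hN0⟩⟩) (P k)
    have hmk : m k = P k i0 := hi0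
    have hcard : ((Finset.univ.erase i0).card : ℝ) = (N:ℝ) - 1 := by
      rw [Finset.card_erase_of_mem (Finset.mem_univ i0), Finset.card_univ, Fintype.card_fin]
      push_cast [Nat.cast_sub (by omega : 1 ≤ N)]; ring
    have hsum_erase : ∑ i ∈ Finset.univ.erase i0, P k i = 1 - m k := by
      have := Finset.add_sum_erase Finset.univ (P k) (Finset.mem_univ i0)
      rw [hPs k] at this
      rw [hmk]; linarith
    -- Jensen on erased set with uniform weights
    have hjen : ∑ i ∈ Finset.univ.erase i0, (((N:ℝ)-1)⁻¹) • f (P k i) ≤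
        f (∑ i ∈ Finset.univ.erase i0, (((N:ℝ)-1)⁻¹) • P k i) := by
      apply hf.le_map_sum
      · intro i _; positivity
      · rw [Finset.sum_const, nsmul_eq_mul, hcard]
        field_simp
      · intro i _; exact ⟨hP k i, hPle k i⟩
    have h2 : ∑ i ∈ Finset.univ.erase i0, (((N:ℝ)-1)⁻¹) • P k i = (1 - m k) / ((N:ℝ)-1) := by
      simp only [smul_eq_mul, ← Finset.mul_sum, hsum_erase]
      ring
    rw [h2] at hjen
    have h3 : ∑ i ∈ Finset.univ.erase i0, f (P k i) ≤ ((N:ℝ)-1) * f ((1 - m k) / ((N:ℝ)-1)) := by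
      have := mul_le_mul_of_nonneg_left hjen hN1.le
      rw [Finset.mul_sum] at this
      calc ∑ i ∈ Finset.univ.erase i0, f (P k i)
          = ∑ i ∈ Finset.univ.erase i0, ((N:ℝ)-1) * ((((N:ℝ)-1)⁻¹) • f (P k i)) := by
            apply Finset.sum_congr rfl; intro i _
            rw [smul_eq_mul]; field_simp
        _ ≤ ((N:ℝ)-1) * f ((1 - m k) / ((N:ℝ)-1)) := this
    have hsplit : ∑ i, f (P k i) = f (P k i0) + ∑ i ∈ Finset.univ.erase i0, f (P k i) :=
      (Finset.add_sum_erase Finset.univ (fun i => f (P k i)) (Finset.mem_univ i0)).symm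
    rw [hmk] at h3
    rw [hsplit, hmk]
    linarith
  -- outer Jensen
  have hjw1 : ∑ k, w k • f (m k) ≤ f (∑ k, w k • m k) :=
    hf.le_map_sum (fun k _ => hw k) hws (fun k _ => ⟨hm0 k, hm1 k⟩)
  have hjw2 : ∑ k, w k • f ((1 - m k)/((N:ℝ)-1)) ≤ f (∑ k, w k • ((1 - m k)/((N:ℝ)-1))) :=
    hf.le_map_sum (fun k _ => hw k) hws (fun k _ => hrmem k)
  have hes : ∑ k, w k • m k = e := by rw [he]; rfl
  have hes2 : ∑ k, w k • ((1 - m k)/((N:ℝ)-1)) = (1 - e)/((N:ℝ)-1) := by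
    simp only [smul_eq_mul]
    rw [← hes]
    simp only [smul_eq_mul]
    rw [eq_div_iff hN1.ne', Finset.sum_mul]
    have : ∑ k, w k * ((1 - m k)/((N:ℝ)-1)) * ((N:ℝ)-1) = ∑ k, (w k - w k * m k) := by
      apply Finset.sum_congr rfl; intro k _; field_simp
    rw [this, Finset.sum_sub_distrib, hws]
  rw [hes] at hjw1
  rw [hes2] at hjw2
  calc ∑ k, ∑ i, w k * f (P k i) = ∑ k, w k * ∑ i, f (P k i) := by
        apply Finset.sum_congr rfl; intro k _; rw [Finset.mul_sum]
    _ ≤ ∑ k, w k * (f (m k) + ((N:ℝ)-1) * f ((1 - m k)/((N:ℝ)-1))) := by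
        apply Finset.sum_le_sum; intro k _
        exact mul_le_mul_of_nonneg_left (hinner k) (hw k)
    _ = ∑ k, w k • f (m k) + ((N:ℝ)-1) * ∑ k, w k • f ((1 - m k)/((N:ℝ)-1)) := by
        rw [Finset.mul_sum, ← Finset.sum_add_distrib]
        apply Finset.sum_congr rfl; intro k _
        simp only [smul_eq_mul]; ring
    _ ≤ f e + ((N:ℝ)-1) * f ((1 - e)/((N:ℝ)-1)) := by
        have := mul_le_mul_of_nonneg_left hjw2 hN1.le
        linarith
end

section
/- Let N ≥ 2 and let f : ℝ → ℝ be concave on the interval [0,1]. Define u(t) = f(t) + (N−1)·f((1−t)/(N−1)). Then u is non-increasing on the interval [1/N, 1]: for all s, t with 1/N ≤ s ≤ t ≤ 1 one has u(t) ≤ u(s). (Paper's Theorem 2, monotonicity of the upper bound.) -/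
open Finset

/-- Paper's Theorem 2 (monotonicity of the upper bound): for `N ≥ 2` and `f` concave
on `[0,1]`, the function `u(t) = f(t) + (N-1) * f((1-t)/(N-1))` is non-increasing
on `[1/N, 1]`. -/
theorem upper_bound_antitone (N : ℕ) (hN : 2 ≤ N)
    (f : ℝ → ℝ) (hf : ConcaveOn ℝ (Set.Icc (0 : ℝ) 1) f)
    (s t : ℝ) (hs : 1 / (N : ℝ) ≤ s) (hst : s ≤ t) (ht : t ≤ 1) :
    f t + ((N : ℝ) - 1) * f ((1 - t) / ((N : ℝ) - 1)) ≤
      f s + ((N : ℝ) - 1) * f ((1 - s) / ((N : ℝ) - 1)) := by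
  rcases eq_or_lt_of_le hst with rfl | hst'
  · exact le_refl _
  have hn : (2:ℝ) ≤ (N:ℝ) := by exact_mod_cast hN
  have hn1 : (0:ℝ) < (N:ℝ) - 1 := by linarith
  have hN0 : (0:ℝ) < (N:ℝ) := by linarith
  set a := (1 - t) / ((N : ℝ) - 1) with ha
  set b := (1 - s) / ((N : ℝ) - 1) with hb
  have hsN : 1 ≤ (N:ℝ) * s := by
    rw [div_le_iff₀ hN0] at hs; linarith
  have htN : 1 ≤ (N:ℝ) * t := by nlinarith
  have hs0 : 0 ≤ s := by nlinarith
  have hab : a ≤ b := by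
    rw [ha, hb, div_le_div_iff₀ hn1 hn1]; nlinarith
  have hbs : b ≤ s := by
    rw [hb, div_le_iff₀ hn1]; nlinarith
  have hat : a < t := lt_of_le_of_lt (le_trans hab hbs) hst'
  have ha0 : 0 ≤ a := div_nonneg (by linarith) (le_of_lt hn1)
  have ha1 : a ≤ 1 := by
    rw [ha, div_le_one hn1]; linarith
  have htm : t ∈ Set.Icc (0:ℝ) 1 := ⟨by linarith, ht⟩
  have ham : a ∈ Set.Icc (0:ℝ) 1 := ⟨ha0, ha1⟩
  have hd : 0 < t - a := by linarith
  have hta : t + ((N:ℝ) - 1) * a = 1 := by rw [ha]; field_simp; ring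
  have hsb : s + ((N:ℝ) - 1) * b = 1 := by rw [hb]; field_simp; ring
  clear_value a b
  set l := (s - a) / (t - a) with hl
  set m := (b - a) / (t - a) with hm
  have hl0 : 0 ≤ l := div_nonneg (by linarith) hd.le
  have hm0 : 0 ≤ m := div_nonneg (by linarith) hd.le
  have hl1 : 0 ≤ 1 - l := by
    rw [hl, sub_nonneg, div_le_one hd]; linarith
  have hm1 : 0 ≤ 1 - m := by
    rw [hm, sub_nonneg, div_le_one hd]; linarith
  have hcomb1 : l • t + (1 - l) • a = s := by
    rw [hl, smul_eq_mul, smul_eq_mul]; field_simp [hd.ne']; ring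
  have hcomb2 : m • t + (1 - m) • a = b := by
    rw [hm, smul_eq_mul, smul_eq_mul]; field_simp [hd.ne']; ring
  have h1 := hf.2 htm ham hl0 hl1 (by ring)
  have h2 := hf.2 htm ham hm0 hm1 (by ring)
  rw [hcomb1] at h1
  rw [hcomb2] at h2
  simp only [smul_eq_mul] at h1 h2
  have h2' : ((N:ℝ) - 1) * (m * f t + (1 - m) * f a) ≤ ((N:ℝ) - 1) * f b :=
    mul_le_mul_of_nonneg_left h2 hn1.le
  have hsum : l + ((N:ℝ) - 1) * m = 1 := by
    rw [hl, hm]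
    field_simp
    linear_combination hsb - hta
  have key : f t + ((N:ℝ) - 1) * f a =
      (l * f t + (1 - l) * f a) + ((N:ℝ) - 1) * (m * f t + (1 - m) * f a) := by
    linear_combination (f a - f t) * hsum
  linarith
end

section
/- Suppose a quantizer Q : Fin M → Fin K attains e_Q = ∑_{j ∈ Fin M} max_{i ∈ Fin N} p i j. Then for every k ∈ Fin K there exists an index i_k ∈ Fin N such that p i_k j = max_{i ∈ Fin N} p i j for every j with Q j = k. (Paper's Theorem 3(a), converse: any quantizer producing e^max must have the maximum-likelihood structure, i.e., each cell is served by a single maximizing row index.) -/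
open Finset

/-- The value `e_Q` induced by a quantizer `Q : Fin M → Fin K` on a joint matrix `p`:
`e_Q = ∑_k max_i ∑_{j : Q j = k} p i j`. -/
noncomputable def eQ {N M K : ℕ} (hN : 0 < N) (p : Fin N → Fin M → ℝ)
    (Q : Fin M → Fin K) : ℝ :=
  ∑ k, colMax hN (fun i => ∑ j ∈ Finset.univ.filter (fun j => Q j = k), p i j)

/-- Paper's Theorem 3(a), converse: any quantizer attaining
`e_Q = ∑_j max_i p i j` must have the maximum-likelihood structure: each cell `k`
is served by a single row index `i_k` attaining the column maximum for every column
in the cell. -/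
theorem emax_quantizer_structure (N M K : ℕ) (hN : 1 ≤ N) (hM : 1 ≤ M) (hK : 1 ≤ K)
    (p : Fin N → Fin M → ℝ) (hp : ∀ i j, 0 ≤ p i j)
    (Q : Fin M → Fin K)
    (hQ : eQ (by omega) p Q = ∑ j, colMax (by omega : 0 < N) (fun i => p i j)) :
    ∀ k : Fin K, ∃ ik : Fin N, ∀ j : Fin M, Q j = k →
      p ik j = colMax (by omega : 0 < N) (fun i => p i j) := by
  have hN' : 0 < N := by omega
  have hne : (Finset.univ : Finset (Fin N)).Nonempty :=
    Finset.univ_nonempty_iff.mpr ⟨⟨0, hN'⟩⟩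
  set f : Fin K → ℝ := fun k =>
    colMax hN' (fun i => ∑ j ∈ Finset.univ.filter (fun j => Q j = k), p i j) with hf
  set g : Fin K → ℝ := fun k =>
    ∑ j ∈ Finset.univ.filter (fun j => Q j = k), colMax hN' (fun i => p i j) with hg
  have hle : ∀ k ∈ Finset.univ, f k ≤ g k := by
    intro k _
    apply Finset.sup'_le
    intro i _
    exact Finset.sum_le_sum fun j _ => Finset.le_sup' (fun i => p i j) (Finset.mem_univ i)
  have hsum : ∑ k, f k = ∑ k, g k :=
    calc ∑ k, f k = ∑ j, colMax hN' (fun i => p i j) := hQ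
    _ = ∑ k, g k := (Finset.sum_fiberwise Finset.univ Q
        (fun j => colMax hN' (fun i => p i j))).symm
  have heq : ∀ k ∈ Finset.univ, f k = g k :=
    (Finset.sum_eq_sum_iff_of_le hle).mp hsum
  intro k
  obtain ⟨ik, _, hik⟩ := Finset.exists_mem_eq_sup' hne
    (fun i => ∑ j ∈ Finset.univ.filter (fun j => Q j = k), p i j)
  refine ⟨ik, fun j hj => ?_⟩
  have hk := heq k (Finset.mem_univ k)
  have hsum2 : ∑ j ∈ Finset.univ.filter (fun j => Q j = k), p ik j
      = ∑ j ∈ Finset.univ.filter (fun j => Q j = k),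
        colMax hN' (fun i => p i j) := (hk.symm.trans hik).symm
  have := (Finset.sum_eq_sum_iff_of_le (fun j _ =>
      Finset.le_sup' (fun i => p i j) (Finset.mem_univ ik))).mp hsum2
  exact this j (Finset.mem_filter.mpr ⟨Finset.mem_univ j, hj⟩)
end

section
/- Let N ≥ 2 and let (w¹, P¹) (with K₁ ≥ 1 cells) and (w², P²) (with K₂ ≥ 1 cells) be two configurations on the same N classes, with confidences e₁ and e₂ and Gini index impurities I₁ and I₂ respectively. If e₁ ≥ e₂, then I₁ ≤ 2·I₂. (Paper's Theorem 8: since Algorithm 1's output maximizes the confidence, it is a 2-approximation for Gini impurity minimization.) -/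
open Finset

lemma gini_eq {N : ℕ} (p : Fin N → ℝ) (hs : ∑ i, p i = 1) :
    ∑ i, p i * (1 - p i) = 1 - ∑ i, p i * p i := by
  rw [← hs, ← Finset.sum_sub_distrib]
  exact Finset.sum_congr rfl fun i _ => by rw [hs]; ring

lemma gini_le_two {N : ℕ} (hN : 0 < N) (p : Fin N → ℝ) (hp : ∀ i, 0 ≤ p i)
    (hs : ∑ i, p i = 1) : ∑ i, p i * (1 - p i) ≤ 2 * (1 - colMax hN p) := by
  obtain ⟨j, -, hj⟩ := Finset.exists_mem_eq_sup'
    (Finset.univ_nonempty_iff.mpr ⟨⟨0, hN⟩⟩) p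
  have hsq : p j * p j ≤ ∑ i, p i * p i :=
    Finset.single_le_sum (fun i _ => mul_nonneg (hp i) (hp i)) (Finset.mem_univ j)
  rw [gini_eq p hs, colMax, hj]
  nlinarith [sq_nonneg (p j - 1)]

lemma one_sub_max_le_gini {N : ℕ} (hN : 0 < N) (p : Fin N → ℝ) (hp : ∀ i, 0 ≤ p i)
    (hs : ∑ i, p i = 1) : 1 - colMax hN p ≤ ∑ i, p i * (1 - p i) := by
  have h : ∑ i, p i * p i ≤ colMax hN p := by
    calc ∑ i, p i * p i ≤ ∑ i, colMax hN p * p i := by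
          refine Finset.sum_le_sum fun i _ => mul_le_mul_of_nonneg_right ?_ (hp i)
          exact Finset.le_sup' p (Finset.mem_univ i)
      _ = colMax hN p := by rw [← Finset.mul_sum, hs, mul_one]
  rw [gini_eq p hs]; linarith

/-- Paper's Theorem 8 (2-approximation for Gini impurity): if one configuration has
confidence at least that of another, its Gini impurity is at most twice the other's. -/
theorem gini_two_approximation (N K₁ K₂ : ℕ) (hN : 2 ≤ N) (hK₁ : 1 ≤ K₁) (hK₂ : 1 ≤ K₂)
    (w₁ : Fin K₁ → ℝ) (hw₁ : ∀ k, 0 ≤ w₁ k) (hws₁ : ∑ k, w₁ k = 1)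
    (P₁ : Fin K₁ → Fin N → ℝ) (hP₁ : ∀ k i, 0 ≤ P₁ k i) (hPs₁ : ∀ k, ∑ i, P₁ k i = 1)
    (w₂ : Fin K₂ → ℝ) (hw₂ : ∀ k, 0 ≤ w₂ k) (hws₂ : ∑ k, w₂ k = 1)
    (P₂ : Fin K₂ → Fin N → ℝ) (hP₂ : ∀ k i, 0 ≤ P₂ k i) (hPs₂ : ∀ k, ∑ i, P₂ k i = 1)
    (e₁ e₂ : ℝ)
    (he₁ : e₁ = ∑ k, w₁ k * colMax (by omega) (P₁ k))
    (he₂ : e₂ = ∑ k, w₂ k * colMax (by omega) (P₂ k))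
    (hee : e₂ ≤ e₁) :
    ∑ k, ∑ i, w₁ k * (P₁ k i * (1 - P₁ k i)) ≤
      2 * ∑ k, ∑ i, w₂ k * (P₂ k i * (1 - P₂ k i)) := by
  have hN0 : 0 < N := by omega
  have h1 : ∑ k, ∑ i, w₁ k * (P₁ k i * (1 - P₁ k i)) ≤ 2 * (1 - e₁) := by
    have : ∀ k, ∑ i, w₁ k * (P₁ k i * (1 - P₁ k i))
        ≤ w₁ k * (2 * (1 - colMax hN0 (P₁ k))) := fun k => by
      rw [← Finset.mul_sum]
      exact mul_le_mul_of_nonneg_left (gini_le_two hN0 (P₁ k) (hP₁ k) (hPs₁ k)) (hw₁ k)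
    calc ∑ k, ∑ i, w₁ k * (P₁ k i * (1 - P₁ k i))
        ≤ ∑ k, w₁ k * (2 * (1 - colMax hN0 (P₁ k))) :=
          Finset.sum_le_sum fun k _ => this k
      _ = 2 * (1 - e₁) := by
          rw [he₁]
          rw [show (1:ℝ) = ∑ k, w₁ k from hws₁.symm, ← Finset.sum_sub_distrib,
            Finset.mul_sum]
          exact Finset.sum_congr rfl fun k _ => by rw [hws₁]; ring
  have h2 : 2 * (1 - e₂) ≤ 2 * ∑ k, ∑ i, w₂ k * (P₂ k i * (1 - P₂ k i)) := by
    have : ∀ k, w₂ k * (1 - colMax hN0 (P₂ k))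
        ≤ ∑ i, w₂ k * (P₂ k i * (1 - P₂ k i)) := fun k => by
      rw [← Finset.mul_sum]
      exact mul_le_mul_of_nonneg_left (one_sub_max_le_gini hN0 (P₂ k) (hP₂ k) (hPs₂ k)) (hw₂ k)
    have hsum : 1 - e₂ ≤ ∑ k, ∑ i, w₂ k * (P₂ k i * (1 - P₂ k i)) := by
      calc 1 - e₂ = ∑ k, w₂ k * (1 - colMax hN0 (P₂ k)) := by
            rw [he₂, show (1:ℝ) = ∑ k, w₂ k from hws₂.symm, ← Finset.sum_sub_distrib]
            exact Finset.sum_congr rfl fun k _ => by rw [hws₂]; ring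
        _ ≤ _ := Finset.sum_le_sum fun k _ => this k
    linarith
  linarith
end
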